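/- Let H be a connected bipartite graph with bipartition parts of sizes n_1, n_2 and part-maximum-degrees Delta_1 ≥ Delta_2. If Delta_2 ≥ 2 (i.e., H is not a star), then for all r ≥ 4, R̂_r(H) ≥ (r^2/32)*(Delta_2 - 1)*(n_1 + n_2). -/

import Mathlib

set_option maxHeartbeats 1600000
open SimpleGraph Finset


lemma aux_const {W : Type*} {H : SimpleGraph W} (hc : H.Preconnected)
    (p : W → Prop) (h : ∀ a b, H.Adj a b → (p a ↔ p b)) :
    ∀ a b, p a ↔ p b := by
  intro a b
  obtain ⟨wlk⟩ := hc a b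
  induction wlk with
  | nil => rfl
  | cons hadj _ ih => exact (h _ _ hadj).trans ih

def pc (N a b : ℕ) : ℕ :=
  if a = N then (2*b) % N else if b = N then (2*a) % N else (a+b) % N

lemma pc_symm (N a b : ℕ) : pc N a b = pc N b a := by
  unfold pc; split_ifs with h1 h2 h3 <;> first | simp_all | rw [Nat.add_comm]

lemma pc_lt (N a b : ℕ) (hN : 0 < N) : pc N a b < N := by
  unfold pc; split_ifs <;> exact Nat.mod_lt _ hN

lemma pc_inj {N a b b' : ℕ} (hodd : Odd N) (ha : a ≤ N) (hb : b ≤ N) (hb' : b' ≤ N)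
    (hba : b ≠ a) (hb'a : b' ≠ a) (h : pc N a b = pc N a b') : b = b' := by
  have hN : 0 < N := hodd.pos
  have hco : Nat.gcd N 2 = 1 := Nat.coprime_comm.mp (Nat.coprime_two_left.mpr hodd)
  unfold pc at h
  have cancel2 : ∀ x y : ℕ, 2*x ≡ 2*y [MOD N] → x < N → y < N → x = y := by
    intro x y hxy hx hy
    have : x ≡ y [MOD N] := Nat.ModEq.cancel_left_of_coprime hco hxy
    calc x = x % N := (Nat.mod_eq_of_lt hx).symm
    _ = y % N := this
    _ = y := Nat.mod_eq_of_lt hy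
  rcases eq_or_lt_of_le ha with rfl | haN
  · simp only [if_pos rfl] at h
    exact cancel2 _ _ h (lt_of_le_of_ne hb hba) (lt_of_le_of_ne hb' hb'a)
  · have haN' : a ≠ N := Nat.ne_of_lt haN
    rw [if_neg haN', if_neg haN'] at h
    by_cases hbN : b = N
    · rw [if_pos hbN] at h
      by_cases hb'N : b' = N
      · rw [hbN, hb'N]
      · rw [if_neg hb'N] at h
        have hb'lt : b' < N := lt_of_le_of_ne hb' hb'N
        exfalso; apply hb'a
        have h3 : a + a ≡ a + b' [MOD N] := by
          unfold Nat.ModEq; rw [← two_mul, h]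
        have h4 := Nat.ModEq.add_left_cancel' a h3
        unfold Nat.ModEq at h4
        rw [Nat.mod_eq_of_lt haN, Nat.mod_eq_of_lt hb'lt] at h4
        exact h4.symm
    · rw [if_neg hbN] at h
      have hblt : b < N := lt_of_le_of_ne hb hbN
      by_cases hb'N : b' = N
      · rw [if_pos hb'N] at h
        exfalso; apply hba
        have h3 : a + a ≡ a + b [MOD N] := by
          unfold Nat.ModEq; rw [← two_mul, ← h]
        have h4 := Nat.ModEq.add_left_cancel' a h3
        unfold Nat.ModEq at h4
        rw [Nat.mod_eq_of_lt haN, Nat.mod_eq_of_lt hblt] at h4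
        exact h4.symm
      · rw [if_neg hb'N] at h
        have hb'lt : b' < N := lt_of_le_of_ne hb' hb'N
        have h5 : b ≡ b' [MOD N] := Nat.ModEq.add_left_cancel' a h
        calc b = b % N := (Nat.mod_eq_of_lt hblt).symm
        _ = b' % N := h5
        _ = b' := Nat.mod_eq_of_lt hb'lt

noncomputable def rk {V : Type*} [DecidableEq V] (S : Finset V) (v : V) : ℕ :=
  if h : v ∈ S then ((Fintype.equivFin ↥S) ⟨v, h⟩ : Fin _).val else 0

lemma rk_lt {V : Type*} [DecidableEq V] {S : Finset V} {v : V} (h : v ∈ S) :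
    rk S v < S.card := by
  rw [rk, dif_pos h]
  exact lt_of_lt_of_eq ((Fintype.equivFin ↥S) ⟨v, h⟩).isLt (Fintype.card_coe S)

lemma rk_injOn {V : Type*} [DecidableEq V] (S : Finset V) : Set.InjOn (rk S) ↑S := by
  intro a ha b hb hab
  have ha' : a ∈ S := ha
  have hb' : b ∈ S := hb
  rw [rk, rk, dif_pos ha', dif_pos hb'] at hab
  have := (Fintype.equivFin ↥S).injective (Fin.ext hab)
  exact Subtype.ext_iff.mp this

lemma fiber_le {V : Type*} [DecidableEq V] (S : Finset V) (z a : ℕ) (hz : 0 < z) :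
    (S.filter (fun v => rk S v / z = a)).card ≤ z := by
  have h := Finset.card_le_card_of_injOn (rk S)
    (t := Finset.Ico (a*z) (a*z+z)) (s := S.filter (fun v => rk S v / z = a)) ?_ ?_
  · simpa using h
  · intro v hv
    rw [Finset.mem_coe, Finset.mem_filter] at hv
    rw [Finset.mem_coe, Finset.mem_Ico]
    constructor
    · have h2 : a ≤ rk S v / z := le_of_eq hv.2.symm
      exact (Nat.le_div_iff_mul_le hz).mp h2
    · have h3 : rk S v / z < a + 1 := by omega
      have h4 := (Nat.div_lt_iff_lt_mul hz).mp h3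
      nlinarith
  · refine Set.InjOn.mono ?_ (rk_injOn S)
    intro x hx
    simp only [Finset.coe_filter, Set.mem_setOf_eq] at hx
    exact hx.1

lemma arith_main (r m D : ℕ) (hr : 4 ≤ r) (hm : r^2 ≤ m) (hD : 1 ≤ D) :
    r^2 * D * m ≤ 16 * ((r/3)*D + 1) * (2 * ((r - r/3 + 1)/2) * ((m-1)/2) + 1) := by
  have hm16 : 16 ≤ m := le_trans (by nlinarith) hm
  set c0 := r/3 with hc0
  set k := r - c0 with hk0
  set w := (k+1)/2 with hw0
  set z := (m-1)/2 with hz0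
  have h1 : 1 ≤ c0 := by omega
  have h3a : 3*c0 ≤ r := by omega
  have h3b : r ≤ 3*c0 + 2 := by omega
  have hk : 2*c0 ≤ k := by omega
  have hw : k ≤ 2*w := by omega
  obtain ⟨m', rfl⟩ : ∃ m', m = m' + 2 := ⟨m - 2, by omega⟩
  have hzz : m' ≤ 2*z := by omega
  by_cases hm18 : 16 ≤ m'
  · obtain ⟨e, hke, he2⟩ : ∃ e, k = 2*c0 + e ∧ e ≤ 2 := ⟨k - 2*c0, by omega, by omega⟩
    have hre : r = 3*c0 + e := by omega
    have h64 : 9*r^2 ≤ 64 * c0 * k := by rw [hre, hke]; nlinarith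
    have h4wz : k*m' ≤ 4*(w*z) := by nlinarith [Nat.mul_le_mul hw hzz]
    have key : 8 * (r^2 * (m'+2)) ≤ 64 * c0 * k * m' := by
      nlinarith [Nat.mul_le_mul_right m' h64]
    have main : r^2 * (m'+2) ≤ 32 * (c0 * (w*z)) := by
      nlinarith [Nat.mul_le_mul_left (16*c0) h4wz]
    calc r^2*D*(m'+2) = D * (r^2*(m'+2)) := by ring
    _ ≤ D * (32 * (c0 * (w*z))) := Nat.mul_le_mul (le_refl D) main
    _ ≤ 16 * (c0*D+1) * (2*w*z+1) := by nlinarith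
  · have hr4 : r = 4 := by nlinarith
    have hcc : c0 = 1 := by omega
    have hww : w = 2 := by omega
    rw [hr4, hcc, hww]
    have h16 : (4:ℕ)^2 = 16 := by norm_num
    rw [h16]
    nlinarith [hzz, hD, hm16]

lemma greedy {V : Type*} [DecidableEq V] (k D g : ℕ) (hD : 1 ≤ D) (hk : 1 ≤ k)
    (hg : 2*g ≤ k + 1) (F : Finset (Sym2 V))
    (hdeg : ∀ v : V, (F.filter (fun e => v ∈ e)).card ≤ g*D) :
    ∃ φ : Sym2 V → ℕ, (∀ e, φ e < k) ∧
      ∀ v j, ((F.filter (fun e => v ∈ e ∧ φ e = j)).card ≤ D) := by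
  classical
  revert hdeg
  induction F using Finset.strongInduction with
  | _ F ih =>
  intro hdeg
  rcases F.eq_empty_or_nonempty with rfl | ⟨e, he⟩
  · exact ⟨fun _ => 0, fun _ => hk, by simp⟩
  obtain ⟨⟨x, y⟩, rfl⟩ := Quot.exists_rep e
  set e := s(x, y) with hee
  set F' := F.erase e with hF'
  have hsub : F' ⊂ F := Finset.erase_ssubset he
  have hdeg' : ∀ v, (F'.filter (fun e' => v ∈ e')).card ≤ g*D := fun v =>
    le_trans (Finset.card_le_card
      (Finset.filter_subset_filter _ (Finset.erase_subset _ _))) (hdeg v)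
  obtain ⟨φ, hφlt, hφ⟩ := ih F' hsub hdeg'
  set bad : V → Finset ℕ := fun v => (Finset.range k).filter
    (fun j => D ≤ (F'.filter (fun e' => v ∈ e' ∧ φ e' = j)).card) with hbad
  have hbadcard : ∀ v, v ∈ e → (bad v).card ≤ g - 1 := by
    intro v hv
    have hF'v : (F'.filter (fun e' => v ∈ e')) =
        (F.filter (fun e' => v ∈ e')).erase e := by
      rw [hF', Finset.filter_erase]
    have hvF : e ∈ F.filter (fun e' => v ∈ e') := Finset.mem_filter.mpr ⟨he, hv⟩
    have hcard1 : (F'.filter (fun e' => v ∈ e')).card ≤ g*D - 1 := by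
      rw [hF'v, Finset.card_erase_of_mem hvF]
      have := hdeg v
      omega
    have hdis : ∀ j ∈ bad v, ∀ j' ∈ bad v, j ≠ j' →
        Disjoint (F'.filter (fun e' => v ∈ e' ∧ φ e' = j))
          (F'.filter (fun e' => v ∈ e' ∧ φ e' = j')) := by
      intro j _ j' _ hjj'
      rw [Finset.disjoint_left]
      intro a ha hb
      rw [Finset.mem_filter] at ha hb
      exact hjj' (ha.2.2.symm.trans hb.2.2)
    have hbu : (bad v).biUnion (fun j => F'.filter (fun e' => v ∈ e' ∧ φ e' = j))
        ⊆ F'.filter (fun e' => v ∈ e') := by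
      intro a ha
      simp only [Finset.mem_biUnion, Finset.mem_filter] at ha ⊢
      obtain ⟨j, _, h1, h2, _⟩ := ha
      exact ⟨h1, h2⟩
    have hsum : (bad v).card * D ≤ g*D - 1 := by
      calc (bad v).card * D = ∑ _j ∈ bad v, D := by
            rw [Finset.sum_const, smul_eq_mul, Nat.mul_comm]
      _ ≤ ∑ j ∈ bad v, (F'.filter (fun e' => v ∈ e' ∧ φ e' = j)).card := by
            apply Finset.sum_le_sum
            intro j hj
            exact (Finset.mem_filter.mp hj).2
      _ = ((bad v).biUnion (fun j => F'.filter (fun e' => v ∈ e' ∧ φ e' = j))).card :=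
            (Finset.card_biUnion hdis).symm
      _ ≤ (F'.filter (fun e' => v ∈ e')).card := Finset.card_le_card hbu
      _ ≤ g*D - 1 := hcard1
    have hg1 : 1 ≤ g * D := le_trans (Finset.card_pos.mpr ⟨e, hvF⟩) (hdeg v)
    by_contra hcon
    push_neg at hcon
    have hgB : g ≤ (bad v).card := by omega
    have := Nat.mul_le_mul_right D hgB
    omega
  have hxbad := hbadcard x (by rw [hee]; exact Sym2.mem_mk_left x y)
  have hybad := hbadcard y (by rw [hee]; exact Sym2.mem_mk_right x y)
  have hunion : ((bad x) ∪ (bad y)).card < k := by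
    have := Finset.card_union_le (bad x) (bad y)
    omega
  obtain ⟨j, hjk, hjbad⟩ : ∃ j, j ∈ Finset.range k ∧ j ∉ (bad x) ∪ (bad y) := by
    by_contra hcon
    push_neg at hcon
    have hsubs : Finset.range k ⊆ bad x ∪ bad y := fun j hj => hcon j hj
    have := Finset.card_le_card hsubs
    rw [Finset.card_range] at this
    omega
  refine ⟨Function.update φ e j, ?_, ?_⟩
  · intro e'
    by_cases h : e' = e
    · rw [h, Function.update_self]; exact Finset.mem_range.mp hjk
    · rw [Function.update_of_ne h]; exact hφlt e'
  · intro v j'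
    have hFE : F = insert e F' := (Finset.insert_erase he).symm
    rw [hFE, Finset.filter_insert]
    have hcong : F'.filter (fun e' => v ∈ e' ∧ Function.update φ e j e' = j') =
        F'.filter (fun e' => v ∈ e' ∧ φ e' = j') := by
      apply Finset.filter_congr
      intro e' he'
      rw [Function.update_of_ne (Finset.mem_erase.mp he').1]
    split_ifs with hcase
    · rw [Finset.card_insert_of_notMem (fun hmem => (Finset.mem_erase.mp
        (Finset.mem_filter.mp hmem).1).1 rfl), hcong]
      obtain ⟨hv, hj'⟩ := hcase
      rw [Function.update_self] at hj'
      subst hj'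
      have hvxy : v = x ∨ v = y := Sym2.mem_iff.mp hv
      have hnotbad : j ∉ bad v := by
        rcases hvxy with rfl | rfl
        · exact fun hmem => hjbad (Finset.mem_union_left _ hmem)
        · exact fun hmem => hjbad (Finset.mem_union_right _ hmem)
      have : ¬ (D ≤ (F'.filter (fun e' => v ∈ e' ∧ φ e' = j)).card) := by
        intro hle
        exact hnotbad (Finset.mem_filter.mpr ⟨hjk, hle⟩)
      omega
    · rw [hcong]
      exact hφ v j'


/-- `H` has a copy in `G`: an injective graph homomorphism from `H` to `G`. -/
def HasCopy {W V : Type*} (H : SimpleGraph W) (G : SimpleGraph V) : Prop :=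
  ∃ f : H →g G, Function.Injective f

/-- Under the `r`-edge-coloring `c`, some color class of `G` contains a copy of `H`. -/
def HasMonoCopy {W V : Type*} (H : SimpleGraph W) (G : SimpleGraph V)
    {r : ℕ} (c : Sym2 V → Fin r) : Prop :=
  ∃ i : Fin r, HasCopy H (SimpleGraph.fromRel fun u v => G.Adj u v ∧ c s(u, v) = i)

/-- Degree of a vertex, as the natural cardinality of its neighbor set. -/
noncomputable def deg {V : Type*} (G : SimpleGraph V) (v : V) : ℕ := (G.neighborSet v).ncard

theorem stmt_9 {W : Type*} [Fintype W] [DecidableEq W] (H : SimpleGraph W)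
    (V1 V2 : Finset W) (hdisj : Disjoint V1 V2) (hcover : V1 ∪ V2 = Finset.univ)
    (hbip : ∀ u v, H.Adj u v → (u ∈ V1 ∧ v ∈ V2) ∨ (u ∈ V2 ∧ v ∈ V1))
    (hconn : H.Connected)
    (hΔ : V2.sup (deg H) ≤ V1.sup (deg H)) (hΔ2 : 2 ≤ V2.sup (deg H))
    (r : ℕ) (hr : 4 ≤ r) (hlarge : r ^ 2 ≤ V1.card + V2.card)
    {V : Type*} [Fintype V] (G : SimpleGraph V)
    (hE : 32 * G.edgeSet.ncard <
      r ^ 2 * (V2.sup (deg H) - 1) * (V1.card + V2.card)) :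
    ∃ c : Sym2 V → Fin r, ¬ HasMonoCopy H G c := by
  classical
  letI : DecidableRel G.Adj := Classical.decRel _
  -- abbreviations
  set Δ2 := V2.sup (deg H) with hΔ2def
  set Δ1 := V1.sup (deg H) with hΔ1def
  set m := V1.card + V2.card with hmdef
  set D := Δ2 - 1 with hDdef
  have hD1 : 1 ≤ D := by omega
  set c0 := r/3 with hc0
  set k := r - c0 with hkdef
  set w := (k+1)/2 with hwdef
  set z := (m-1)/2 with hzdef
  set N := 2*w - 1 with hNdef
  set t := c0*D + 1 with htdef
  have hm16 : 16 ≤ m := le_trans (by nlinarith) hlarge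
  have hz1 : 0 < z := by omega
  have hc01 : 1 ≤ c0 := by omega
  have hkc0 : 2*c0 ≤ k := by omega
  have hk1 : 1 ≤ k := by omega
  have hw1 : 1 ≤ w := by omega
  have hNk : N ≤ k := by omega
  have hN1 : 0 < N := by omega
  have hkc0r : k + c0 = r := by omega
  have hNodd : Odd N := ⟨w - 1, by omega⟩
  have hr0 : 0 < r := by omega
  have hWcard : Fintype.card W = m := by
    rw [← Finset.card_univ, ← hcover, Finset.card_union_of_disjoint hdisj]
  -- the high-degree set
  set U : Finset V := Finset.univ.filter (fun v => t ≤ G.degree v) with hUdef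
  have hEE : G.edgeSet.ncard = G.edgeFinset.card := by
    rw [SimpleGraph.edgeFinset]; exact Set.ncard_eq_toFinset_card' _
  rw [hEE] at hE
  have hUsum : U.card * t ≤ 2 * G.edgeFinset.card := by
    calc U.card * t = U.card • t := by rw [smul_eq_mul]
    _ ≤ ∑ v ∈ U, G.degree v := Finset.card_nsmul_le_sum U _ t
        (fun v hv => (Finset.mem_filter.mp hv).2)
    _ ≤ ∑ v : V, G.degree v := Finset.sum_le_sum_of_subset (Finset.subset_univ U)
    _ = 2 * G.edgeFinset.card := G.sum_degrees_eq_twice_card_edges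
  have harith := arith_main r m D hr hlarge hD1
  rw [← hc0, ← hkdef, ← hwdef, ← hzdef, ← htdef] at harith
  have hUcap : U.card ≤ 2*w*z := by
    have h1 : 32 * G.edgeFinset.card < 16*(t*(2*w*z+1)) := by
      calc 32 * G.edgeFinset.card < r^2 * D * m := hE
      _ ≤ 16 * t * (2*w*z+1) := harith
      _ = 16*(t*(2*w*z+1)) := by ring
    have h2 : 16*(U.card * t) ≤ 32 * G.edgeFinset.card := by
      calc 16*(U.card*t) ≤ 16*(2*G.edgeFinset.card) := Nat.mul_le_mul_left 16 hUsum
      _ = 32 * G.edgeFinset.card := by ring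
    have h3 : U.card * t < t * (2*w*z+1) := by
      have := lt_of_le_of_lt h2 h1
      exact Nat.lt_of_mul_lt_mul_left this
    have h4 : U.card < 2*w*z+1 := by
      rw [mul_comm t _] at h3
      exact Nat.lt_of_mul_lt_mul_right h3
    omega
  -- cells
  set cell : V → ℕ := fun v => rk U v / z with hcelldef
  have hcell_lt : ∀ v ∈ U, cell v < 2*w := by
    intro v hv
    have h1 : rk U v < 2*w*z := lt_of_lt_of_le (rk_lt hv) hUcap
    exact (Nat.div_lt_iff_lt_mul hz1).mpr h1
  have hcell_le_N : ∀ v ∈ U, cell v ≤ N := by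
    intro v hv; have := hcell_lt v hv; omega
  -- index of a high neighbor at a low vertex
  set idx : V → V → ℕ := fun y u => rk ((G.neighborFinset y).filter (fun u' => u' ∈ U)) u
    with hidxdef
  have hidx_lt : ∀ y u, y ∉ U → G.Adj y u → u ∈ U → idx y u < c0 * D := by
    intro y u hy hadj hu
    have humem : u ∈ (G.neighborFinset y).filter (fun u' => u' ∈ U) :=
      Finset.mem_filter.mpr ⟨(SimpleGraph.mem_neighborFinset _ _ _).mpr hadj, hu⟩
    have h1 : idx y u < ((G.neighborFinset y).filter (fun u' => u' ∈ U)).card := rk_lt humem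
    have h2 : ((G.neighborFinset y).filter (fun u' => u' ∈ U)).card ≤ G.degree y :=
      Finset.card_le_card (Finset.filter_subset _ _)
    have h3 : G.degree y < t := by
      by_contra hcon
      exact hy (Finset.mem_filter.mpr ⟨Finset.mem_univ _, by omega⟩)
    omega
  -- low-low edges, greedy coloring
  set FA : Finset (Sym2 V) := G.edgeFinset.filter (fun e => ∀ v ∈ e, v ∉ U) with hFAdef
  have hFAdeg : ∀ v : V, (FA.filter (fun e => v ∈ e)).card ≤ c0*D := by
    intro v
    by_cases hv : v ∈ U
    · have hempty : FA.filter (fun e => v ∈ e) = ∅ := by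
        rw [Finset.filter_eq_empty_iff]
        intro e he hve
        exact ((Finset.mem_filter.mp he).2 v hve) hv
      rw [hempty]; simp
    · have hdegv : G.degree v < t := by
        by_contra hcon
        exact hv (Finset.mem_filter.mpr ⟨Finset.mem_univ _, by omega⟩)
      have hsub : FA.filter (fun e => v ∈ e) ⊆ G.incidenceFinset v := by
        intro e he
        rw [Finset.mem_filter, hFAdef, Finset.mem_filter] at he
        rw [SimpleGraph.mem_incidenceFinset]
        exact ⟨(SimpleGraph.mem_edgeFinset).mp he.1.1, he.2⟩
      have := Finset.card_le_card hsub
      rw [SimpleGraph.card_incidenceFinset_eq_degree] at this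
      omega
  obtain ⟨φ, hφlt, hφcount⟩ := greedy k D c0 hD1 hk1 (by omega) FA hFAdeg
  -- the coloring
  set Fc : V → V → ℕ := fun u v =>
    if u ∈ U then (if v ∈ U then pc N (cell u) (cell v) else k + idx v u / D)
    else (if v ∈ U then k + idx u v / D else φ s(u,v)) with hFcdef
  have hFcsymm : ∀ u v, Fc u v = Fc v u := by
    intro u v
    by_cases hu : u ∈ U <;> by_cases hv : v ∈ U <;>
      simp only [hFcdef, hu, hv, if_pos, if_neg, if_true, if_false]
    · exact pc_symm N _ _
    · rw [Sym2.eq_swap]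
  have hFc_lt : ∀ u v, G.Adj u v → Fc u v < r := by
    intro u v hadj
    by_cases hu : u ∈ U <;> by_cases hv : v ∈ U <;>
      simp only [hFcdef, hu, hv, if_pos, if_neg, if_true, if_false]
    · exact lt_of_lt_of_le (pc_lt N _ _ hN1) (le_trans hNk (by omega))
    · have := hidx_lt v u hv hadj.symm hu
      have : idx v u / D < c0 := (Nat.div_lt_iff_lt_mul hD1).mpr (by omega)
      omega
    · have := hidx_lt u v hu hadj hv
      have : idx u v / D < c0 := (Nat.div_lt_iff_lt_mul hD1).mpr (by omega)
      omega
    · exact lt_of_lt_of_le (hφlt _) (by omega)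
  set cc : Sym2 V → Fin r := Sym2.lift ⟨fun u v => ⟨Fc u v % r, Nat.mod_lt _ hr0⟩,
    fun u v => by simp only [hFcsymm u v]⟩ with hccdef
  refine ⟨cc, ?_⟩
  rintro ⟨i, f, hfinj⟩
  -- basic edge facts
  have hedge : ∀ a b, H.Adj a b → G.Adj (f a) (f b) ∧ Fc (f a) (f b) = (i : ℕ) := by
    intro a b hab
    have h := f.map_adj hab
    rw [SimpleGraph.fromRel_adj] at h
    obtain ⟨hne, hcase⟩ := h
    have hGadj : G.Adj (f a) (f b) := by
      rcases hcase with ⟨h1, _⟩ | ⟨h1, _⟩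
      · exact h1
      · exact h1.symm
    refine ⟨hGadj, ?_⟩
    have hcval : (cc s(f a, f b) : ℕ) = Fc (f a) (f b) := by
      have hrfl : (cc s(f a, f b) : ℕ) = Fc (f a) (f b) % r := rfl
      rw [hrfl]
      exact Nat.mod_eq_of_lt (hFc_lt _ _ hGadj)
    have h2' : cc s(f a, f b) = i := by
      rcases hcase with ⟨_, h2⟩ | ⟨_, h2⟩
      · exact h2
      · rw [Sym2.eq_swap]; exact h2
    have h3 : (cc s(f a, f b) : ℕ) = (i : ℕ) := congrArg Fin.val h2'
    rw [← hcval]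
    exact h3
  -- class neighborhoods
  set classNbr : V → Finset V :=
    fun x => (G.neighborFinset x).filter (fun v => Fc x v = (i : ℕ)) with hclassdef
  have hHle : ∀ w' : W, deg H w' ≤ (classNbr (f w')).card := by
    intro w'
    have hfin : (H.neighborSet w').Finite := Set.toFinite _
    rw [deg, Set.ncard_eq_toFinset_card _ hfin]
    apply Finset.card_le_card_of_injOn f
    · intro b hb
      rw [Finset.mem_coe, Set.Finite.mem_toFinset, SimpleGraph.mem_neighborSet] at hb
      obtain ⟨hGadj, hcol⟩ := hedge w' b hb
      exact Finset.mem_filter.mpr ⟨(SimpleGraph.mem_neighborFinset _ _ _).mpr hGadj, hcol⟩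
    · exact Function.Injective.injOn hfinj
  -- degree bounds at low vertices
  have hlowA : (i : ℕ) < k → ∀ x, x ∉ U → (classNbr x).card ≤ D := by
    intro hik x hx
    have hmap : ∀ v ∈ classNbr x, s(x, v) ∈ FA.filter (fun e => x ∈ e ∧ φ e = (i:ℕ)) := by
      intro v hv
      simp only [hclassdef, Finset.mem_filter, SimpleGraph.mem_neighborFinset] at hv
      obtain ⟨hadj, hcol⟩ := hv
      have hvU : v ∉ U := by
        intro hvU
        simp only [hFcdef] at hcol
        rw [if_neg hx, if_pos hvU] at hcol
        generalize hq : idx x v / D = q at hcol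
        omega
      simp only [hFcdef] at hcol
      rw [if_neg hx, if_neg hvU] at hcol
      refine Finset.mem_filter.mpr ⟨Finset.mem_filter.mpr ⟨?_, ?_⟩, ?_, hcol⟩
      · exact SimpleGraph.mem_edgeFinset.mpr hadj
      · intro u hu
        rcases Sym2.mem_iff.mp hu with rfl | rfl
        · exact hx
        · exact hvU
      · exact Sym2.mem_mk_left _ _
    calc (classNbr x).card ≤ (FA.filter (fun e => x ∈ e ∧ φ e = (i:ℕ))).card := by
          apply Finset.card_le_card_of_injOn (fun v => s(x, v)) hmap
          intro a _ b _ hab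
          exact Sym2.congr_right.mp hab
    _ ≤ D := hφcount x (i : ℕ)
  have hlowB : k ≤ (i : ℕ) → ∀ x, x ∉ U → (classNbr x).card ≤ D := by
    intro hik x hx
    have hvU : ∀ v ∈ classNbr x, v ∈ U ∧ idx x v / D = (i:ℕ) - k := by
      intro v hv
      simp only [hclassdef, Finset.mem_filter, SimpleGraph.mem_neighborFinset] at hv
      obtain ⟨hadj, hcol⟩ := hv
      by_cases hvU : v ∈ U
      · rw [hFcdef] at hcol
        simp only [if_neg hx, if_pos hvU] at hcol
        exact ⟨hvU, by omega⟩
      · exfalso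
        simp only [hFcdef] at hcol
        rw [if_neg hx, if_neg hvU] at hcol
        have := hφlt s(x, v)
        omega
    have hmap : ∀ v ∈ classNbr x, idx x v ∈ Finset.Ico (((i:ℕ)-k)*D) (((i:ℕ)-k)*D + D) := by
      intro v hv
      obtain ⟨_, hdiv⟩ := hvU v hv
      rw [Finset.mem_Ico]
      constructor
      · exact (Nat.le_div_iff_mul_le hD1).mp (le_of_eq hdiv.symm)
      · have h3 : idx x v / D < ((i:ℕ)-k) + 1 := by omega
        have h4 := (Nat.div_lt_iff_lt_mul hD1).mp h3
        nlinarith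
    calc (classNbr x).card ≤ (Finset.Ico (((i:ℕ)-k)*D) (((i:ℕ)-k)*D + D)).card := by
          apply Finset.card_le_card_of_injOn (fun v => idx x v) hmap
          intro a ha b hb hab
          have ha' : a ∈ classNbr x := Finset.mem_coe.mp ha
          have hb' : b ∈ classNbr x := Finset.mem_coe.mp hb
          have haU := (hvU a ha').1
          have hbU := (hvU b hb').1
          simp only [hclassdef, Finset.mem_filter] at ha' hb'
          have haN : a ∈ (G.neighborFinset x).filter (fun u' => u' ∈ U) :=
            Finset.mem_filter.mpr ⟨ha'.1, haU⟩
          have hbN : b ∈ (G.neighborFinset x).filter (fun u' => u' ∈ U) :=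
            Finset.mem_filter.mpr ⟨hb'.1, hbU⟩
          exact rk_injOn _ haN hbN hab
    _ = D := by rw [Nat.card_Ico]; omega
  -- existence of max-degree vertices
  have hV2ne : V2.Nonempty := by
    by_contra hcon
    rw [Finset.not_nonempty_iff_eq_empty] at hcon
    rw [hΔ2def, hcon] at hΔ2
    simp at hΔ2
  have hV1ne : V1.Nonempty := by
    by_contra hcon
    rw [Finset.not_nonempty_iff_eq_empty] at hcon
    rw [hΔ1def, hcon] at hΔ
    simp at hΔ
    omega
  obtain ⟨w2, hw2mem, hw2deg⟩ := Finset.exists_mem_eq_sup V2 hV2ne (deg H)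
  obtain ⟨w1, hw1mem, hw1deg⟩ := Finset.exists_mem_eq_sup V1 hV1ne (deg H)
  rw [← hΔ2def] at hw2deg
  rw [← hΔ1def] at hw1deg
  by_cases hik : (i : ℕ) < k
  · -- pool-1 color
    have hsame : ∀ a b, H.Adj a b → ((f a ∈ U) ↔ (f b ∈ U)) := by
      intro a b hab
      obtain ⟨hGadj, hcol⟩ := hedge a b hab
      constructor
      · intro hfa
        by_contra hfb
        simp only [hFcdef] at hcol
        rw [if_pos hfa, if_neg hfb] at hcol
        generalize hq : idx (f b) (f a) / D = q at hcol
        omega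
      · intro hfb
        by_contra hfa
        simp only [hFcdef] at hcol
        rw [if_neg hfa, if_pos hfb] at hcol
        generalize hq : idx (f a) (f b) / D = q at hcol
        omega
    have hconst := aux_const hconn.preconnected (fun a => f a ∈ U) hsame
    by_cases hw2U : f w2 ∈ U
    · -- everything maps into U; cells confine the copy
      have hallU : ∀ a, f a ∈ U := fun a => (hconst a w2).mpr hw2U
      set a0 := cell (f w2) with ha0def
      set S : Finset ℕ := insert a0 ((Finset.range (2*w)).filter
        (fun b => b ≠ a0 ∧ pc N a0 b = (i:ℕ))) with hSdef
      have ha0N : a0 ≤ N := hcell_le_N _ (hallU w2)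
      have hScard : S.card ≤ 2 := by
        have h1 : ((Finset.range (2*w)).filter (fun b => b ≠ a0 ∧ pc N a0 b = (i:ℕ))).card ≤ 1 := by
          rw [Finset.card_le_one]
          intro a ha b hb
          rw [Finset.mem_filter, Finset.mem_range] at ha hb
          exact pc_inj hNodd ha0N (by omega) (by omega) ha.2.1 hb.2.1
            (ha.2.2.trans hb.2.2.symm)
        calc S.card ≤ _ + 1 := Finset.card_insert_le _ _
        _ ≤ 2 := by omega
      have hstep : ∀ a b, H.Adj a b → cell (f a) ∈ S → cell (f b) ∈ S := by
        intro a b hab haS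
        have hfa := hallU a
        have hfb := hallU b
        obtain ⟨hGadj, hcol⟩ := hedge a b hab
        simp only [hFcdef] at hcol
        rw [if_pos hfa, if_pos hfb] at hcol
        by_cases hbb : cell (f b) = cell (f a)
        · rw [hbb]; exact haS
        rcases Finset.mem_insert.mp haS with ha0 | hafil
        · by_cases hba0 : cell (f b) = a0
          · rw [hba0]; exact Finset.mem_insert_self _ _
          · apply Finset.mem_insert.mpr
            right
            rw [Finset.mem_filter, Finset.mem_range]
            exact ⟨hcell_lt _ hfb, hba0, by rw [← ha0]; exact hcol⟩
        · rw [Finset.mem_filter] at hafil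
          have h1 : pc N (cell (f a)) a0 = (i:ℕ) := by
            rw [pc_symm]; exact hafil.2.2
          have h2 : cell (f b) = a0 := by
            apply pc_inj hNodd (hcell_le_N _ hfa) (hcell_le_N _ hfb) ha0N hbb
              (fun hcon => hafil.2.1 hcon.symm) (hcol.trans h1.symm)
          rw [h2]; exact Finset.mem_insert_self _ _
      have hiff : ∀ a b, H.Adj a b → (cell (f a) ∈ S ↔ cell (f b) ∈ S) :=
        fun a b hab => ⟨hstep a b hab, hstep b a hab.symm⟩
      have hallS : ∀ a, cell (f a) ∈ S := fun a =>
        (aux_const hconn.preconnected (fun a => cell (f a) ∈ S) hiff a w2).mpr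
          (Finset.mem_insert_self _ _)
      have hcount : (m : ℕ) ≤ 2*z := by
        have hinj : Fintype.card W ≤ (U.filter (fun v => cell v ∈ S)).card := by
          rw [← Finset.card_univ]
          apply Finset.card_le_card_of_injOn f
          · intro a _
            exact Finset.mem_filter.mpr ⟨hallU a, hallS a⟩
          · exact Function.Injective.injOn hfinj
        have hsub : U.filter (fun v => cell v ∈ S) ⊆
            S.biUnion (fun s => U.filter (fun v => cell v = s)) := by
          intro v hv
          rw [Finset.mem_filter] at hv
          exact Finset.mem_biUnion.mpr ⟨cell v, hv.2, Finset.mem_filter.mpr ⟨hv.1, rfl⟩⟩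
        have hbi : (S.biUnion (fun s => U.filter (fun v => cell v = s))).card ≤
            S.card * z := by
          calc (S.biUnion (fun s => U.filter (fun v => cell v = s))).card
              ≤ ∑ s ∈ S, (U.filter (fun v => cell v = s)).card := Finset.card_biUnion_le
          _ ≤ ∑ _s ∈ S, z := Finset.sum_le_sum (fun s _ => fiber_le U z s hz1)
          _ = S.card * z := by rw [Finset.sum_const, smul_eq_mul]
        have := le_trans hinj (le_trans (Finset.card_le_card hsub) hbi)
        rw [hWcard] at this
        calc m ≤ S.card * z := this
        _ ≤ 2 * z := Nat.mul_le_mul_right z hScard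
      omega
    · -- everything maps to low vertices
      have hlow : f w2 ∉ U := hw2U
      have h1 := hHle w2
      have h2 := hlowA hik (f w2) hlow
      rw [← hw2deg] at h1
      omega
  · -- C-pool color
    push_neg at hik
    have hxor : ∀ a b, H.Adj a b → ((f a ∈ U) ↔ ¬(f b ∈ U)) := by
      intro a b hab
      obtain ⟨hGadj, hcol⟩ := hedge a b hab
      by_cases hfa : f a ∈ U <;> by_cases hfb : f b ∈ U
      · exfalso
        simp only [hFcdef] at hcol
        rw [if_pos hfa, if_pos hfb] at hcol
        have := pc_lt N (cell (f a)) (cell (f b)) hN1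
        omega
      · simp [hfa, hfb]
      · simp [hfa, hfb]
      · exfalso
        simp only [hFcdef] at hcol
        rw [if_neg hfa, if_neg hfb] at hcol
        have := hφlt s(f a, f b)
        omega
    have hbipiff : ∀ a b, H.Adj a b → ((a ∈ V1) ↔ ¬(b ∈ V1)) := by
      intro a b hab
      rcases hbip a b hab with ⟨ha1, hb2⟩ | ⟨ha2, hb1⟩
      · have : b ∉ V1 := fun hb1 => (Finset.disjoint_left.mp hdisj hb1) hb2
        simp [ha1, this]
      · have : a ∉ V1 := fun ha1 => (Finset.disjoint_left.mp hdisj ha1) ha2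
        simp [this, hb1]
    have hpres : ∀ a b, H.Adj a b → (((f a ∈ U) ↔ (a ∈ V1)) ↔ ((f b ∈ U) ↔ (b ∈ V1))) := by
      intro a b hab
      have h1 := hxor a b hab
      have h2 := hbipiff a b hab
      tauto
    have hconstp := aux_const hconn.preconnected (fun a => (f a ∈ U) ↔ (a ∈ V1)) hpres
    by_cases hw2U : f w2 ∈ U
    · have hw2V1 : w2 ∉ V1 := fun h => (Finset.disjoint_left.mp hdisj h) hw2mem
      have hp2 : ¬((f w2 ∈ U) ↔ (w2 ∈ V1)) := by tauto
      have hp1 : ¬((f w1 ∈ U) ↔ (w1 ∈ V1)) := fun h => hp2 ((hconstp w1 w2).mp h)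
      have hw1low : f w1 ∉ U := by tauto
      have h1 := hHle w1
      have h2 := hlowB hik (f w1) hw1low
      rw [← hw1deg] at h1
      omega
    · have h1 := hHle w2
      have h2 := hlowB hik (f w2) hw2U
      rw [← hw2deg] at h1
      omega
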